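/- LFI1 equals LFI3 plus the schema (cc) ∘∘α: for every set of formulas Γ and formula ψ, Γ ⊨_LFI1 ψ if and only if Γ ∪ {∘∘β : β a formula} ⊨_LFI3 ψ. -/
import Mathlib


/-- Formulas of the language with ¬, ∘, ∧, ∨, →. -/
inductive Fm : Type
  | atom : Nat → Fm
  | neg : Fm → Fm
  | circ : Fm → Fm
  | conj : Fm → Fm → Fm
  | disj : Fm → Fm → Fm
  | impl : Fm → Fm → Fm

/-- The five truth values of LFI3: T=(1,0,0), t=(1,0,1), b=(1,1,1), f=(0,1,1), F=(0,1,0). -/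
inductive V5 : Type
  | T | t | b | f | F
deriving DecidableEq

open V5

/-- Rank in the linear order F < f < b < t < T. -/
def rk : V5 → Nat
  | F => 0 | f => 1 | b => 2 | t => 3 | T => 4

/-- Infimum in the linear order F < f < b < t < T. -/
def min5 (x y : V5) : V5 := if rk x ≤ rk y then x else y

/-- Supremum in the linear order F < f < b < t < T. -/
def max5 (x y : V5) : V5 := if rk x ≤ rk y then y else x

/-- Negation: ¬(a₁,a₂,a₃) = (a₂,a₁,a₃). -/
def neg5 : V5 → V5
  | T => F | t => f | b => b | f => t | F => T

/-- Consistency: ∘(a₁,a₂,a₃) = (~(a₁∧a₂), a₃, a₃∧~(a₁∧a₂)). -/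
def circ5 : V5 → V5
  | T => T | t => b | b => F | f => b | F => T

/-- Strong negation ~a := ¬a ∧ ∘a. -/
def snd5 (x : V5) : V5 := min5 (neg5 x) (circ5 x)

/-- Implication a→b := ~a ∨ b. -/
def imp5 (x y : V5) : V5 := max5 (snd5 x) y

/-- Designated values: D = {T, t, b}. -/
def des (x : V5) : Prop := 2 ≤ rk x

/-- The valuation (homomorphism into the LFI3 algebra) extending an atom assignment. -/
def ev (v : Nat → V5) : Fm → V5
  | Fm.atom n => v n
  | Fm.neg a => neg5 (ev v a)
  | Fm.circ a => circ5 (ev v a)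
  | Fm.conj a c => min5 (ev v a) (ev v c)
  | Fm.disj a c => max5 (ev v a) (ev v c)
  | Fm.impl a c => imp5 (ev v a) (ev v c)

/-- Semantical consequence of LFI3. -/
def L3Cons (Γ : Set Fm) (ψ : Fm) : Prop :=
  ∀ v : Nat → V5, (∀ γ ∈ Γ, des (ev v γ)) → des (ev v ψ)

/-- Consequence of LFI1, given by the matrix on the subalgebra {T, b, F} of the
LFI3 algebra with designated values {T, b}. -/
def L1Cons (Γ : Set Fm) (ψ : Fm) : Prop :=
  ∀ v : Nat → V5, (∀ n, v n ∈ ({V5.T, V5.b, V5.F} : Set V5)) →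
    (∀ γ ∈ Γ, ev v γ ∈ ({V5.T, V5.b} : Set V5)) → ev v ψ ∈ ({V5.T, V5.b} : Set V5)

abbrev Sub3 : Set V5 := {V5.T, V5.b, V5.F}

lemma mem_sub3 {x : V5} : x ∈ Sub3 ↔ x = V5.T ∨ x = V5.b ∨ x = V5.F := by
  simp [Sub3]

lemma mem_des2 {x : V5} : x ∈ ({V5.T, V5.b} : Set V5) ↔ x = V5.T ∨ x = V5.b := by
  simp

lemma closed_ev (v : Nat → V5) (h : ∀ n, v n ∈ Sub3) : ∀ φ, ev v φ ∈ Sub3 := by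
  intro φ
  induction φ with
  | atom n => exact h n
  | neg a ih =>
      rcases mem_sub3.mp ih with h | h | h <;> simp [ev, h, neg5, mem_sub3]
  | circ a ih =>
      rcases mem_sub3.mp ih with h | h | h <;> simp [ev, h, circ5, mem_sub3]
  | conj a c iha ihc =>
      rcases mem_sub3.mp iha with h1 | h1 | h1 <;>
        rcases mem_sub3.mp ihc with h2 | h2 | h2 <;>
          simp [ev, h1, h2, min5, rk, mem_sub3]
  | disj a c iha ihc =>
      rcases mem_sub3.mp iha with h1 | h1 | h1 <;>
        rcases mem_sub3.mp ihc with h2 | h2 | h2 <;>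
          simp [ev, h1, h2, max5, rk, mem_sub3]
  | impl a c iha ihc =>
      rcases mem_sub3.mp iha with h1 | h1 | h1 <;>
        rcases mem_sub3.mp ihc with h2 | h2 | h2 <;>
          simp [ev, h1, h2, imp5, snd5, neg5, circ5, min5, max5, rk, mem_sub3]

lemma circ_circ_des (v : Nat → V5) (β : Fm) (h : ev v β ∈ Sub3) :
    des (ev v β.circ.circ) := by
  rcases mem_sub3.mp h with h | h | h <;> simp [ev, h, circ5, des, rk]

/-- LFI1 = LFI3 + the schema (cc) ∘∘α. -/
theorem stmt11 (Γ : Set Fm) (ψ : Fm) :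
    L1Cons Γ ψ ↔ L3Cons (Γ ∪ {φ | ∃ β : Fm, φ = β.circ.circ}) ψ := by
  constructor
  · intro h1 v hΓ
    have hatoms : ∀ n, v n ∈ Sub3 := by
      intro n
      have := hΓ ((Fm.atom n).circ.circ) (Or.inr ⟨Fm.atom n, rfl⟩)
      revert this
      cases hv : v n <;> simp [ev, hv, circ5, des, rk, mem_sub3]
    have hΓ' : ∀ γ ∈ Γ, ev v γ ∈ ({V5.T, V5.b} : Set V5) := by
      intro γ hγ
      have hd := hΓ γ (Or.inl hγ)
      have hs := closed_ev v hatoms γ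
      rcases mem_sub3.mp hs with h | h | h <;> simp_all [des, rk]
    have := h1 v hatoms hΓ'
    rcases mem_des2.mp this with h | h <;> simp [h, des, rk]
  · intro h3 v hatoms hΓ
    have hall : ∀ γ ∈ Γ ∪ {φ | ∃ β : Fm, φ = β.circ.circ}, des (ev v γ) := by
      rintro γ (hγ | ⟨β, rfl⟩)
      · rcases mem_des2.mp (hΓ γ hγ) with h | h <;> simp [h, des, rk]
      · exact circ_circ_des v β (closed_ev v hatoms β)
    have hd := h3 v hall
    have hs := closed_ev v hatoms ψ
    rcases mem_sub3.mp hs with h | h | h <;> simp_all [des, rk]
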